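/- Let k ≥ 2 and set L = lcm(1, 2, …, k−1). For each G ∈ {Ñ_k, Ž_k}: there exist polynomials p_1, …, p_L ∈ ℚ[t] such that χ^quasi_G(q) = p_m(q) for every q ∈ ℤ_{>0} with q ≡ m (mod L); moreover, for every positive integer ρ for which there exists a family of polynomials f_1, …, f_ρ ∈ ℚ[t] with χ^quasi_G(q) = f_m(q) whenever q ≡ m (mod ρ), L divides ρ. In other words, the characteristic quasi-polynomials of Ñ_k and Ž_k (and hence their weight enumerators) are quasi-polynomials whose minimum period is lcm(1, 2, …, k−1). -/

import Mathlib

open scoped BigOperators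

namespace ArrCode

variable {k n : ℕ}

/-- The integer matrix `G` with entries reduced modulo `q`. -/
def Gmod (G : Matrix (Fin k) (Fin n) ℤ) (q : ℕ) : Matrix (Fin k) (Fin n) (ZMod q) :=
  G.map (Int.cast : ℤ → ZMod q)

/-- The code `C_G(q)` over `ℤ/qℤ` generated by the rows of `G`. -/
def code (G : Matrix (Fin k) (Fin n) ℤ) (q : ℕ) : Set (Fin n → ZMod q) :=
  Set.range fun u : Fin k → ZMod q => Matrix.vecMul u (Gmod G q)

/-- `H_J(q) = { u ∈ (ℤ/qℤ)^k : u · g^j = 0 for all j ∈ J }`. -/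
def HJ (G : Matrix (Fin k) (Fin n) ℤ) (J : Finset (Fin n)) (q : ℕ) :
    Set (Fin k → ZMod q) :=
  {u | ∀ j ∈ J, Matrix.vecMul u (Gmod G q) j = 0}

/-- The rank `r(J)` over `ℚ` of the column submatrix `G_J`. -/
noncomputable def rk (G : Matrix (Fin k) (Fin n) ℤ) (J : Finset (Fin n)) : ℕ :=
  Matrix.rank (Matrix.of fun (i : Fin k) (j : J) => (G i j.1 : ℚ))

/-- The gcd of all `j × j` minors of the column submatrix `G_J`
(determinants of submatrices with repeated rows or columns vanish,
so this agrees with the usual minor gcd). -/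
def minorGcd (G : Matrix (Fin k) (Fin n) ℤ) (J : Finset (Fin n)) (j : ℕ) : ℕ :=
  Finset.gcd Finset.univ fun p : (Fin j → Fin k) × (Fin j → J) =>
    ((G.submatrix p.1 fun l => (p.2 l : Fin n)).det).natAbs

/-- The `ℓ`-th elementary divisor (invariant factor) `e_{ℓ,J}` of `G_J`,
characterized by `e_{1,J} ⋯ e_{j,J} =` gcd of all `j × j` minors of `G_J`. -/
def elemDiv (G : Matrix (Fin k) (Fin n) ℤ) (J : Finset (Fin n)) (ℓ : ℕ) : ℕ :=
  minorGcd G J ℓ / minorGcd G J (ℓ - 1)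

/-- The lcm period `ρ₀ = lcm { e_{r(J),J} : ∅ ≠ J ⊆ E }`. -/
noncomputable def lcmPeriod (G : Matrix (Fin k) (Fin n) ℤ) : ℕ :=
  Finset.lcm ((Finset.univ : Finset (Fin n)).powerset.filter fun J => J ≠ ∅)
    fun J => elemDiv G J (rk G J)

/-- The minimum weight `d_q` of `C_G(q)` (equal to `+∞` when the code is trivial). -/
noncomputable def minWt (G : Matrix (Fin k) (Fin n) ℤ) (q : ℕ) : ℕ∞ :=
  ⨅ (c : Fin n → ZMod q) (_ : c ∈ code G q) (_ : c ≠ 0), (hammingNorm c : ℕ∞)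

/-- `A_{G,i}(q)`: the number of codewords of `C_G(q)` of Hamming weight `i`. -/
noncomputable def A (G : Matrix (Fin k) (Fin n) ℤ) (q i : ℕ) : ℕ :=
  {c ∈ code G q | hammingNorm c = i}.ncard

/-- The characteristic quasi-polynomial value: the number of `u ∈ (ℤ/qℤ)^k`
with every coordinate of `uG` nonzero. -/
noncomputable def chiQuasi (G : Matrix (Fin k) (Fin n) ℤ) (q : ℕ) : ℕ :=
  {u : Fin k → ZMod q | ∀ j, Matrix.vecMul u (Gmod G q) j ≠ 0}.ncard

/-- `Π_{ℓ=1}^{r(J)} gcd(m, e_{ℓ,J})`. -/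
noncomputable def gcdProd (G : Matrix (Fin k) (Fin n) ℤ) (m : ℕ) (J : Finset (Fin n)) : ℕ :=
  ∏ ℓ ∈ Finset.Icc 1 (rk G J), Nat.gcd m (elemDiv G J ℓ)

/-- The constituent polynomial `f_i^m(t) ∈ ℚ[t]`. -/
noncomputable def fPoly (G : Matrix (Fin k) (Fin n) ℤ) (m i : ℕ) : Polynomial ℚ :=
  ∑ J ∈ (Finset.univ : Finset (Fin n)).powerset.filter (fun J => J.card = n - i),
    ∑ K ∈ (Finset.univ : Finset (Fin n)).powerset.filter (fun K => J ⊆ K),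
      Polynomial.C ((-1 : ℚ) ^ (K.card - J.card) *
          (gcdProd G m K : ℚ) / (gcdProd G m Finset.univ : ℚ)) *
        Polynomial.X ^ (rk G Finset.univ - rk G K)

/-- `d'_m`: the least positive `i` such that `f_i^m` is not the zero polynomial. -/
noncomputable def dPrime (G : Matrix (Fin k) (Fin n) ℤ) (m : ℕ) : ℕ :=
  sInf {i : ℕ | 0 < i ∧ fPoly G m i ≠ 0}

end ArrCode

namespace ArrCode

/-- The matrix `Ñ_k = (I_k ∣ J_k − I_k)`. -/
def Ntilde (k : ℕ) : Matrix (Fin k) (Fin (2 * k)) ℤ :=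
  Matrix.of fun i j =>
    if (j : ℕ) < k then (if (i : ℕ) = (j : ℕ) then 1 else 0)
    else (if (i : ℕ) = (j : ℕ) - k then 0 else 1)

/-- The matrix `Ž_k = (I_k ∣ J_k − I_k ∣ 1_k)`. -/
def Ztilde (k : ℕ) : Matrix (Fin k) (Fin (2 * k + 1)) ℤ :=
  Matrix.of fun i j =>
    if (j : ℕ) < k then (if (i : ℕ) = (j : ℕ) then 1 else 0)
    else if (j : ℕ) < 2 * k then (if (i : ℕ) = (j : ℕ) - k then 0 else 1)
    else 1

/-- `ρ` is a quasi-polynomial period of `f`: there is a family of polynomials,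
one for each residue class modulo `ρ`, interpolating `f` on positive integers. -/
def IsQuasiPolyPeriod (f : ℕ → ℕ) (ρ : ℕ) : Prop :=
  ∃ p : ℕ → Polynomial ℚ, ∀ q : ℕ, 0 < q → (f q : ℚ) = (p (q % ρ)).eval (q : ℚ)

section Aux
open Finset
variable {q : ℕ} [NeZero q]

noncomputable def gcount (q : ℕ) [NeZero q] (s : ZMod q) (k : ℕ) (t : ZMod q) : ℕ :=
  Nat.card {u : Fin k → ZMod q // (∀ i, u i ≠ 0 ∧ u i ≠ s) ∧ ∑ i, u i = t}

lemma gcount_zero (s t : ZMod q) : gcount q s 0 t = if t = 0 then 1 else 0 := by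
  classical
  rw [gcount, Nat.card_eq_fintype_card]
  split_ifs with h
  · subst h
    rw [Fintype.card_eq_one_iff]
    refine ⟨⟨fun i => i.elim0, by simp⟩, fun y => ?_⟩
    ext i; exact i.elim0
  · rw [Fintype.card_eq_zero_iff]
    constructor
    rintro ⟨u, -, hu⟩
    simp at hu
    exact h hu.symm

lemma gcount_succ (s : ZMod q) (k : ℕ) (t : ZMod q) :
    gcount q s (k+1) t =
      ∑ x : ZMod q, if x ≠ 0 ∧ x ≠ s then gcount q s k (t - x) else 0 := by
  classical
  rw [gcount, Nat.card_eq_fintype_card]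
  have e : {u : Fin (k+1) → ZMod q // (∀ i, u i ≠ 0 ∧ u i ≠ s) ∧ ∑ i, u i = t} ≃
      Σ x : ZMod q, {v : Fin k → ZMod q //
        ((x ≠ 0 ∧ x ≠ s) ∧ (∀ i, v i ≠ 0 ∧ v i ≠ s)) ∧ ∑ i, v i = t - x} := by
    refine
      { toFun := fun u => ⟨u.1 0, Fin.tail u.1, ?_⟩
        invFun := fun p => ⟨Fin.cons p.1 p.2.1, ?_⟩
        left_inv := ?_
        right_inv := ?_ }
    · obtain ⟨u, hu, hs⟩ := u
      rw [Fin.sum_univ_succ] at hs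
      exact ⟨⟨hu 0, fun i => hu i.succ⟩, by
        simp only [Fin.tail]
        rw [eq_sub_iff_add_eq, add_comm]; exact hs⟩
    · obtain ⟨x, v, ⟨⟨hx, hv⟩, hs⟩⟩ := p
      constructor
      · intro i
        refine Fin.cases ?_ ?_ i
        · simpa using hx
        · intro j; simpa using hv j
      · rw [Fin.sum_univ_succ]
        simp only [Fin.cons_zero, Fin.cons_succ]
        rw [hs]; ring
    · rintro ⟨u, hu⟩
      apply Subtype.ext
      exact funext fun i => Fin.cases rfl (fun j => rfl) i
    · rintro ⟨x, v, h⟩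
      apply Sigma.ext
      · rfl
      · simp [Fin.tail]
        rfl
  rw [Fintype.card_congr e, Fintype.card_sigma]
  refine Finset.sum_congr rfl fun x _ => ?_
  split_ifs with hx
  · rw [gcount, Nat.card_eq_fintype_card]
    exact Fintype.card_congr (Equiv.subtypeEquivRight (fun v => by tauto))
  · rw [Fintype.card_eq_zero_iff]
    constructor; rintro ⟨v, ⟨⟨h1, -⟩, -⟩⟩; exact hx h1

-- card of avoid set
lemma card_avoid (s : ZMod q) (hs : s ≠ 0) :
    Nat.card {x : ZMod q // x ≠ 0 ∧ x ≠ s} = q - 2 := by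
  classical
  rw [Nat.card_eq_fintype_card, Fintype.card_subtype]
  have : (univ.filter fun x : ZMod q => x ≠ 0 ∧ x ≠ s) = univ \ {0, s} := by
    ext x; simp [not_or]
  rw [this, card_sdiff_of_subset (by simp)]
  rw [card_univ, ZMod.card]
  congr 1
  rw [card_insert_of_notMem (by simpa using Ne.symm hs), card_singleton]

lemma card_avoid0 : Nat.card {x : ZMod q // x ≠ 0 ∧ x ≠ (0 : ZMod q)} = q - 1 := by
  classical
  rw [Nat.card_eq_fintype_card, Fintype.card_subtype]
  have : (univ.filter fun x : ZMod q => x ≠ 0 ∧ x ≠ 0) = univ \ {0} := by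
    ext x; simp
  rw [this, card_sdiff_of_subset (by simp), card_univ, ZMod.card, card_singleton]

-- total sum lemma
lemma sum_gcount (s : ZMod q) (k : ℕ) (t : ZMod q) :
    ∑ x : ZMod q, gcount q s k (t - x) =
      (Nat.card {x : ZMod q // x ≠ 0 ∧ x ≠ s}) ^ k := by
  classical
  have h1 : ∑ x : ZMod q, gcount q s k (t - x) = ∑ y : ZMod q, gcount q s k y := by
    exact Fintype.sum_equiv (Equiv.subLeft t) _ _ (fun x => rfl)
  rw [h1]
  have h2 : ∀ y, gcount q s k y = (univ.filter fun u : Fin k → ZMod q =>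
      (∀ i, u i ≠ 0 ∧ u i ≠ s) ∧ ∑ i, u i = y).card := by
    intro y
    rw [gcount, Nat.card_eq_fintype_card, Fintype.card_subtype]
  simp_rw [h2]
  have h3 : ∀ y : ZMod q, (univ.filter fun u : Fin k → ZMod q =>
      (∀ i, u i ≠ 0 ∧ u i ≠ s) ∧ ∑ i, u i = y) =
      (univ.filter fun u : Fin k → ZMod q => ∀ i, u i ≠ 0 ∧ u i ≠ s).filter
        (fun u => ∑ i, u i = y) := by
    intro y; rw [Finset.filter_filter]
  simp_rw [h3]
  rw [← Finset.card_eq_sum_card_fiberwise (f := fun u : Fin k → ZMod q => ∑ i, u i)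
    (s := univ.filter fun u : Fin k → ZMod q => ∀ i, u i ≠ 0 ∧ u i ≠ s) (t := univ)
    (fun u _ => mem_univ _)]
  rw [← Fintype.card_subtype, Nat.card_eq_fintype_card,
    Fintype.card_congr (Equiv.subtypePiEquivPi (p := fun _ (x : ZMod q) => x ≠ 0 ∧ x ≠ s)),
    Fintype.card_pi]
  simp

-- ℚ-valued helpers
lemma qpos : (1:ℚ) ≤ (q:ℚ) := by
  have := Nat.pos_of_ne_zero (NeZero.ne q); exact_mod_cast this

lemma q2 (s : ZMod q) (hs : s ≠ 0) : 2 ≤ q := by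
  have : Nontrivial (ZMod q) := ⟨⟨s, 0, hs⟩⟩
  have := Fintype.one_lt_card (α := ZMod q)
  rwa [ZMod.card] at this

lemma sum_ite_avoid (s : ZMod q) (hs : s ≠ 0) (f : ZMod q → ℚ) :
    ∑ x : ZMod q, (if x ≠ 0 ∧ x ≠ s then f x else 0) = (∑ x, f x) - f 0 - f s := by
  classical
  rw [Finset.sum_ite, Finset.sum_const_zero, add_zero]
  have : (univ.filter fun x : ZMod q => x ≠ 0 ∧ x ≠ s) = univ \ {0, s} := by
    ext x; simp [not_or]
  rw [this, Finset.sum_sdiff_eq_sub (by simp)]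
  rw [Finset.sum_pair (Ne.symm hs)]
  ring

lemma sum_ite_avoid0 (f : ZMod q → ℚ) :
    ∑ x : ZMod q, (if x ≠ 0 ∧ x ≠ (0:ZMod q) then f x else 0) = (∑ x, f x) - f 0 := by
  classical
  rw [Finset.sum_ite, Finset.sum_const_zero, add_zero]
  have : (univ.filter fun x : ZMod q => x ≠ 0 ∧ x ≠ 0) = univ \ {0} := by
    ext x; simp
  rw [this, Finset.sum_sdiff_eq_sub (by simp), Finset.sum_singleton]

lemma gcount_succ_cast (s : ZMod q) (hs : s ≠ 0) (k : ℕ) (t : ZMod q) :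
    (gcount q s (k+1) t : ℚ) =
      ((q:ℚ) - 2)^k - gcount q s k t - gcount q s k (t - s) := by
  have h1 : (gcount q s (k+1) t : ℚ)
      = ∑ x : ZMod q, (if x ≠ 0 ∧ x ≠ s then (gcount q s k (t - x) : ℚ) else 0) := by
    rw [gcount_succ, Nat.cast_sum]
    exact Finset.sum_congr rfl fun x _ => by split_ifs <;> simp
  rw [h1, sum_ite_avoid s hs]
  have h2 : ∑ x : ZMod q, (gcount q s k (t - x) : ℚ) = ((q:ℚ) - 2)^k := by
    rw [← Nat.cast_sum, sum_gcount s k t, card_avoid s hs]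
    have : ((q - 2 : ℕ) : ℚ) = (q:ℚ) - 2 := by
      have := q2 s hs; push_cast [this]; ring
    rw [Nat.cast_pow, this]
  rw [h2, sub_zero]

lemma gcount_succ_cast0 (k : ℕ) (t : ZMod q) :
    (gcount q (0 : ZMod q) (k+1) t : ℚ) = ((q:ℚ) - 1)^k - gcount q 0 k t := by
  have h1 : (gcount q (0:ZMod q) (k+1) t : ℚ)
      = ∑ x : ZMod q, (if x ≠ 0 ∧ x ≠ (0:ZMod q) then (gcount q 0 k (t - x) : ℚ) else 0) := by
    rw [gcount_succ, Nat.cast_sum]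
    exact Finset.sum_congr rfl fun x _ => by split_ifs <;> simp
  rw [h1, sum_ite_avoid0]
  have h2 : ∑ x : ZMod q, (gcount q (0:ZMod q) k (t - x) : ℚ) = ((q:ℚ) - 1)^k := by
    rw [← Nat.cast_sum, sum_gcount 0 k t, card_avoid0]
    have : ((q - 1 : ℕ) : ℚ) = (q:ℚ) - 1 := by
      have := Nat.pos_of_ne_zero (NeZero.ne q); push_cast [this]; ring
    rw [Nat.cast_pow, this]
  rw [h2, sub_zero]

lemma closed_zero (k : ℕ) (t : ZMod q) :
    (gcount q (0:ZMod q) k t : ℚ) =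
      (((q:ℚ)-1)^k - (-1)^k)/q + (-1)^k * (if t = 0 then 1 else 0) := by
  induction k generalizing t with
  | zero =>
    rw [gcount_zero]
    split_ifs <;> simp
  | succ k ih =>
    rw [gcount_succ_cast0, ih]
    have hq : (q:ℚ) ≠ 0 := by
      have := Nat.pos_of_ne_zero (NeZero.ne q)
      exact_mod_cast this.ne'
    field_simp
    split_ifs <;> ring

lemma choose_shift (m n : ℕ) (D : ℕ → ℚ) :
    ∑ i ∈ range (n+1), (Nat.choose (m+1) i : ℚ) * D i =
      ∑ i ∈ range (n+1), (Nat.choose m i : ℚ) * D i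
        + ∑ i ∈ range n, (Nat.choose m i : ℚ) * D (i+1) := by
  rw [Finset.sum_range_succ' (fun i => (Nat.choose (m+1) i : ℚ) * D i) n,
    Finset.sum_range_succ' (fun i => (Nat.choose m i : ℚ) * D i) n]
  have : ∀ i, (Nat.choose (m+1) (i+1) : ℚ) * D (i+1)
      = (Nat.choose m i : ℚ) * D (i+1) + (Nat.choose m (i+1) : ℚ) * D (i+1) := by
    intro i
    rw [Nat.choose_succ_succ]
    push_cast
    ring
  simp_rw [this]
  rw [Finset.sum_add_distrib]
  simp [Nat.choose_zero_right]
  ring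

lemma step_alg (a : ℚ) (ha : a ≠ 0) (m : ℕ) (D : ℕ → ℚ) :
    (a-2)^(m+1) - (((a-2)^(m+1) - (-2)^(m+1))/a
        + (-1)^(m+1) * ∑ i ∈ range (m+2), (Nat.choose m i : ℚ) * (D i + D (i+1)))
      - (((a-2)^(m+1) - (-2)^(m+1))/a
        + (-1)^(m+1) * ∑ i ∈ range (m+2), (Nat.choose m i : ℚ) * (D (i+1) + D (i+2)))
    = ((a-2)^(m+2) - (-2)^(m+2))/a
        + (-1)^(m+2) * ∑ i ∈ range (m+3), (Nat.choose (m+1) i : ℚ) * (D i + D (i+1)) := by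
  have h1 : ∑ i ∈ range (m+3), (Nat.choose (m+1) i : ℚ) * (D i + D (i+1))
      = ∑ i ∈ range (m+2), (Nat.choose m i : ℚ) * (D i + D (i+1))
        + ∑ i ∈ range (m+2), (Nat.choose m i : ℚ) * (D (i+1) + D (i+2)) := by
    have h2 := choose_shift m (m+2) (fun i => D i + D (i+1))
    rw [h2, Finset.sum_range_succ, Nat.choose_eq_zero_of_lt (by omega)]
    simp
  rw [h1]
  field_simp
  ring

lemma closed_ne (s : ZMod q) (hs : s ≠ 0) (m : ℕ) (t : ZMod q) :
    (gcount q s (m+1) t : ℚ) =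
      (((q:ℚ)-2)^(m+1) - (-2)^(m+1))/q
        + (-1)^(m+1) * ∑ i ∈ range (m+2), (Nat.choose m i : ℚ) *
            ((if t = i • s then (1:ℚ) else 0) + (if t = (i+1) • s then (1:ℚ) else 0)) := by
  have hq : (q:ℚ) ≠ 0 := by
    have := Nat.pos_of_ne_zero (NeZero.ne q); exact_mod_cast this.ne'
  induction m generalizing t with
  | zero =>
    rw [gcount_succ_cast s hs 0 t]
    simp only [pow_zero, gcount_zero]
    rw [Finset.sum_range_succ, Finset.sum_range_succ, Finset.sum_range_zero]
    simp only [Nat.choose_zero_right, Nat.choose_one_right, Nat.choose_succ_self,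
      zero_smul, one_nsmul, sub_eq_zero, Nat.cast_one, Nat.cast_zero]
    norm_num
    split_ifs <;> field_simp <;> ring
  | succ m ih =>
    rw [gcount_succ_cast s hs (m+1) t, ih t, ih (t - s)]
    have hD : ∀ i : ℕ, (if t - s = i • s then (1:ℚ) else 0) = if t = (i+1) • s then 1 else 0 := by
      intro i
      have h : (t - s = i • s) ↔ (t = (i+1) • s) := by
        rw [sub_eq_iff_eq_add, succ_nsmul]
      simp only [h]
    simp_rw [hD]
    exact step_alg (q:ℚ) hq m (fun i => if t = i • s then (1:ℚ) else 0)






lemma vecMulN_lt (k : ℕ) (u : Fin k → ZMod q) (j : Fin (2 * k)) (h : (j : ℕ) < k) :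
    Matrix.vecMul u (Gmod (Ntilde k) q) j = u ⟨j, h⟩ := by
  classical
  rw [show Matrix.vecMul u (Gmod (Ntilde k) q) j = ∑ i, u i * (Gmod (Ntilde k) q) i j from by
    simp [Matrix.vecMul, dotProduct]]
  have : ∀ i : Fin k, (Gmod (Ntilde k) q) i j = if i = ⟨j, h⟩ then 1 else 0 := by
    intro i
    simp only [Gmod, Ntilde, Matrix.map_apply, Matrix.of_apply, if_pos h]
    by_cases hi : i = ⟨j, h⟩
    · have : (i : ℕ) = (j : ℕ) := by rw [hi]
      simp [hi, this]
    · have : ¬ ((i : ℕ) = (j : ℕ)) := by simpa [Fin.ext_iff] using hi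
      simp [hi, this]
  simp_rw [this, mul_ite, mul_one, mul_zero]
  rw [Finset.sum_ite_eq' univ (⟨j, h⟩ : Fin k) (fun i => u i)]
  simp

lemma vecMulN_ge (k : ℕ) (u : Fin k → ZMod q) (j : Fin (2 * k)) (h : ¬ (j : ℕ) < k) :
    Matrix.vecMul u (Gmod (Ntilde k) q) j
      = (∑ i, u i) - u ⟨(j : ℕ) - k, by omega⟩ := by
  classical
  rw [show Matrix.vecMul u (Gmod (Ntilde k) q) j = ∑ i, u i * (Gmod (Ntilde k) q) i j from by
    simp [Matrix.vecMul, dotProduct]]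
  have : ∀ i : Fin k, (Gmod (Ntilde k) q) i j
      = if i = ⟨(j : ℕ) - k, by omega⟩ then 0 else 1 := by
    intro i
    simp only [Gmod, Ntilde, Matrix.map_apply, Matrix.of_apply, if_neg h]
    by_cases hi : i = ⟨(j : ℕ) - k, by omega⟩
    · have : (i : ℕ) = (j : ℕ) - k := by rw [hi]
      simp [hi, this]
    · have : ¬ ((i : ℕ) = (j : ℕ) - k) := by simpa [Fin.ext_iff] using hi
      simp [hi, this]
  simp_rw [this, mul_ite, mul_zero, mul_one]
  rw [Finset.sum_ite, Finset.sum_const_zero, zero_add]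
  have hfilter : (univ.filter fun i : Fin k => ¬ i = ⟨(j : ℕ) - k, by omega⟩)
      = univ \ {⟨(j : ℕ) - k, by omega⟩} := by
    ext i; simp
  rw [hfilter, Finset.sum_sdiff_eq_sub (by simp), Finset.sum_singleton]

lemma chiN_cond (k : ℕ) (u : Fin k → ZMod q) :
    (∀ j, Matrix.vecMul u (Gmod (Ntilde k) q) j ≠ 0)
      ↔ (∀ i, u i ≠ 0 ∧ u i ≠ ∑ i', u i') := by
  have hik : ∀ i : Fin k, (i : ℕ) < k := fun i => i.2
  constructor
  · intro h i
    constructor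
    · have h1 := h ⟨(i : ℕ), by have := hik i; omega⟩
      rw [vecMulN_lt k u _ (by simpa using hik i)] at h1
      simpa using h1
    · have h2 := h ⟨(i : ℕ) + k, by have := hik i; omega⟩
      rw [vecMulN_ge k u _ (by simp)] at h2
      rw [sub_ne_zero] at h2
      have h3 : (⟨(⟨(i : ℕ) + k, by have := hik i; omega⟩ : Fin (2*k)) - k, by
          simp⟩ : Fin k) = i := by
        apply Fin.ext; simp
      rw [h3] at h2
      exact h2.symm
  · intro h j
    by_cases hj : (j : ℕ) < k
    · rw [vecMulN_lt k u j hj]; exact (h _).1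
    · rw [vecMulN_ge k u j hj, sub_ne_zero]
      exact ((h _).2).symm


omit [NeZero q] in
lemma vecMulZ_lt (k : ℕ) (u : Fin k → ZMod q) (j : Fin (2 * k + 1)) (h : (j : ℕ) < k) :
    Matrix.vecMul u (Gmod (Ztilde k) q) j = u ⟨j, h⟩ := by
  classical
  rw [show Matrix.vecMul u (Gmod (Ztilde k) q) j = ∑ i, u i * (Gmod (Ztilde k) q) i j from by
    simp [Matrix.vecMul, dotProduct]]
  have : ∀ i : Fin k, (Gmod (Ztilde k) q) i j = if i = ⟨j, h⟩ then 1 else 0 := by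
    intro i
    simp only [Gmod, Ztilde, Matrix.map_apply, Matrix.of_apply, if_pos h]
    by_cases hi : i = ⟨j, h⟩
    · have : (i : ℕ) = (j : ℕ) := by rw [hi]
      simp [hi, this]
    · have : ¬ ((i : ℕ) = (j : ℕ)) := by simpa [Fin.ext_iff] using hi
      simp [hi, this]
  simp_rw [this, mul_ite, mul_one, mul_zero]
  rw [Finset.sum_ite_eq' univ (⟨j, h⟩ : Fin k) (fun i => u i)]
  simp

omit [NeZero q] in
lemma vecMulZ_mid (k : ℕ) (u : Fin k → ZMod q) (j : Fin (2 * k + 1)) (h : ¬ (j : ℕ) < k)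
    (h2 : (j : ℕ) < 2 * k) :
    Matrix.vecMul u (Gmod (Ztilde k) q) j
      = (∑ i, u i) - u ⟨(j : ℕ) - k, by omega⟩ := by
  classical
  rw [show Matrix.vecMul u (Gmod (Ztilde k) q) j = ∑ i, u i * (Gmod (Ztilde k) q) i j from by
    simp [Matrix.vecMul, dotProduct]]
  have : ∀ i : Fin k, (Gmod (Ztilde k) q) i j
      = if i = ⟨(j : ℕ) - k, by omega⟩ then 0 else 1 := by
    intro i
    simp only [Gmod, Ztilde, Matrix.map_apply, Matrix.of_apply, if_neg h, if_pos h2]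
    by_cases hi : i = ⟨(j : ℕ) - k, by omega⟩
    · have : (i : ℕ) = (j : ℕ) - k := by rw [hi]
      simp [hi, this]
    · have : ¬ ((i : ℕ) = (j : ℕ) - k) := by simpa [Fin.ext_iff] using hi
      simp [hi, this]
  simp_rw [this, mul_ite, mul_zero, mul_one]
  rw [Finset.sum_ite, Finset.sum_const_zero, zero_add]
  have hfilter : (univ.filter fun i : Fin k => ¬ i = ⟨(j : ℕ) - k, by omega⟩)
      = univ \ {⟨(j : ℕ) - k, by omega⟩} := by
    ext i; simp
  rw [hfilter, Finset.sum_sdiff_eq_sub (by simp), Finset.sum_singleton]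

omit [NeZero q] in
lemma vecMulZ_last (k : ℕ) (u : Fin k → ZMod q) (j : Fin (2 * k + 1)) (h : ¬ (j : ℕ) < 2 * k) :
    Matrix.vecMul u (Gmod (Ztilde k) q) j = ∑ i, u i := by
  classical
  rw [show Matrix.vecMul u (Gmod (Ztilde k) q) j = ∑ i, u i * (Gmod (Ztilde k) q) i j from by
    simp [Matrix.vecMul, dotProduct]]
  have : ∀ i : Fin k, (Gmod (Ztilde k) q) i j = 1 := by
    intro i
    simp only [Gmod, Ztilde, Matrix.map_apply, Matrix.of_apply, if_neg h,
      if_neg (show ¬ (j:ℕ) < k by omega)]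
    simp
  simp [this]

lemma chiZ_cond (k : ℕ) (u : Fin k → ZMod q) :
    (∀ j, Matrix.vecMul u (Gmod (Ztilde k) q) j ≠ 0)
      ↔ (∀ i, u i ≠ 0 ∧ u i ≠ ∑ i', u i') ∧ (∑ i', u i') ≠ 0 := by
  have hik : ∀ i : Fin k, (i : ℕ) < k := fun i => i.2
  constructor
  · intro h
    constructor
    · intro i
      constructor
      · have h1 := h ⟨(i : ℕ), by have := hik i; omega⟩
        rw [vecMulZ_lt k u _ (by simpa using hik i)] at h1
        simpa using h1
      · have h2 := h ⟨(i : ℕ) + k, by have := hik i; omega⟩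
        rw [vecMulZ_mid k u _ (by simp) (by simp; have := hik i; omega)] at h2
        rw [sub_ne_zero] at h2
        have h3 : (⟨(⟨(i : ℕ) + k, by have := hik i; omega⟩ : Fin (2*k+1)) - k, by
            simp⟩ : Fin k) = i := by
          apply Fin.ext; simp
        rw [h3] at h2
        exact h2.symm
    · have h4 := h ⟨2 * k, by omega⟩
      rwa [vecMulZ_last k u _ (by simp)] at h4
  · rintro ⟨h, hsum⟩ j
    by_cases hj : (j : ℕ) < k
    · rw [vecMulZ_lt k u j hj]; exact (h _).1
    · by_cases hj2 : (j : ℕ) < 2 * k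
      · rw [vecMulZ_mid k u j hj hj2, sub_ne_zero]
        exact ((h _).2).symm
      · rw [vecMulZ_last k u j hj2]
        exact hsum


lemma chiN_eq (k : ℕ) : chiQuasi (Ntilde k) q = ∑ s : ZMod q, gcount q s k s := by
  classical
  have h1 : chiQuasi (Ntilde k) q
      = Nat.card {u : Fin k → ZMod q // ∀ i, u i ≠ 0 ∧ u i ≠ ∑ i', u i'} := by
    rw [chiQuasi]
    rw [show ({u : Fin k → ZMod q | ∀ j, Matrix.vecMul u (Gmod (Ntilde k) q) j ≠ 0})
        = {u : Fin k → ZMod q | ∀ i, u i ≠ 0 ∧ u i ≠ ∑ i', u i'} from by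
      ext u; exact chiN_cond k u]
    rfl
  rw [h1]
  have e : {u : Fin k → ZMod q // ∀ i, u i ≠ 0 ∧ u i ≠ ∑ i', u i'}
      ≃ Σ s : ZMod q, {u : Fin k → ZMod q // (∀ i, u i ≠ 0 ∧ u i ≠ s) ∧ ∑ i, u i = s} := by
    refine
      { toFun := fun u => ⟨∑ i', u.1 i', u.1, ⟨u.2, rfl⟩⟩
        invFun := fun p => ⟨p.2.1, ?_⟩
        left_inv := fun u => rfl
        right_inv := ?_ }
    · obtain ⟨s, u, hu, hs⟩ := p
      subst hs
      exact hu
    · rintro ⟨s, u, hu, hs⟩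
      subst hs
      rfl
  rw [Nat.card_congr e, Nat.card_eq_fintype_card, Fintype.card_sigma]
  refine Finset.sum_congr rfl fun s _ => ?_
  rw [gcount, Nat.card_eq_fintype_card]

lemma chiZ_eq (k : ℕ) :
    chiQuasi (Ztilde k) q = ∑ s : ZMod q, if s = 0 then 0 else gcount q s k s := by
  classical
  have h1 : chiQuasi (Ztilde k) q
      = Nat.card {u : Fin k → ZMod q //
          (∀ i, u i ≠ 0 ∧ u i ≠ ∑ i', u i') ∧ (∑ i', u i') ≠ 0} := by
    rw [chiQuasi]
    rw [show ({u : Fin k → ZMod q | ∀ j, Matrix.vecMul u (Gmod (Ztilde k) q) j ≠ 0})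
        = {u : Fin k → ZMod q | (∀ i, u i ≠ 0 ∧ u i ≠ ∑ i', u i') ∧ (∑ i', u i') ≠ 0} from by
      ext u; exact chiZ_cond k u]
    rfl
  rw [h1]
  have e : {u : Fin k → ZMod q // (∀ i, u i ≠ 0 ∧ u i ≠ ∑ i', u i') ∧ (∑ i', u i') ≠ 0}
      ≃ Σ s : ZMod q, {u : Fin k → ZMod q //
          ((∀ i, u i ≠ 0 ∧ u i ≠ s) ∧ s ≠ 0) ∧ ∑ i, u i = s} := by
    refine
      { toFun := fun u => ⟨∑ i', u.1 i', u.1, ⟨⟨u.2.1, u.2.2⟩, rfl⟩⟩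
        invFun := fun p => ⟨p.2.1, ?_⟩
        left_inv := fun u => rfl
        right_inv := ?_ }
    · obtain ⟨s, u, ⟨hu, hs0⟩, hs⟩ := p
      subst hs
      exact ⟨hu, hs0⟩
    · rintro ⟨s, u, ⟨hu, hs0⟩, hs⟩
      subst hs
      rfl
  rw [Nat.card_congr e, Nat.card_eq_fintype_card, Fintype.card_sigma]
  refine Finset.sum_congr rfl fun s _ => ?_
  split_ifs with hs
  · subst hs
    rw [Fintype.card_eq_zero_iff]
    constructor
    rintro ⟨u, ⟨⟨-, h0⟩, -⟩⟩
    exact h0 rfl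
  · rw [gcount, Nat.card_eq_fintype_card]
    exact Fintype.card_congr (Equiv.subtypeEquivRight (fun v => by tauto))


lemma ker_card (n : ℕ) :
    Nat.card {s : ZMod q // (n : ZMod q) * s = 0} = Nat.gcd n q := by
  classical
  have hq : 0 < q := Nat.pos_of_ne_zero (NeZero.ne q)
  set d := Nat.gcd n q with hd
  have hdq : d ∣ q := Nat.gcd_dvd_right n q
  have hdn : d ∣ n := Nat.gcd_dvd_left n q
  have hdpos : 0 < d := Nat.gcd_pos_of_pos_right n hq
  set r := q / d with hr
  have hqrd : q = d * r := (Nat.mul_div_cancel' hdq).symm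
  have hrpos : 0 < r := by
    rcases Nat.eq_zero_or_pos r with h | h
    · rw [h] at hqrd; omega
    · exact h
  obtain ⟨n', hn'⟩ := hdn
  have hmem : ∀ j : ℕ, (n : ZMod q) * ((j * r : ℕ) : ZMod q) = 0 := by
    intro j
    have : ((n * (j * r) : ℕ) : ZMod q) = 0 := by
      rw [ZMod.natCast_eq_zero_iff]
      exact ⟨n' * j, by rw [hn', hqrd]; ring⟩
    push_cast at this ⊢
    linear_combination this
  have hbij : Function.Bijective
      (fun j : Fin d => (⟨(((j : ℕ) * r : ℕ) : ZMod q), hmem j⟩ :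
        {s : ZMod q // (n : ZMod q) * s = 0})) := by
    constructor
    · intro j j' hjj
      have h1 : (((j : ℕ) * r : ℕ) : ZMod q) = (((j' : ℕ) * r : ℕ) : ZMod q) := by
        exact congrArg Subtype.val hjj
      rw [ZMod.natCast_eq_natCast_iff] at h1
      rw [hqrd] at h1
      have h2 : (j : ℕ) ≡ (j' : ℕ) [MOD d] :=
        Nat.ModEq.mul_right_cancel' hrpos.ne' h1
      have := Nat.ModEq.eq_of_lt_of_lt h2 j.2 j'.2
      exact Fin.ext this
    · rintro ⟨s, hs⟩
      have hsval : ((s.val : ℕ) : ZMod q) = s := ZMod.natCast_rightInverse s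
      have hdvd : q ∣ n * s.val := by
        rw [← ZMod.natCast_eq_zero_iff]
        push_cast
        rw [hsval]
        exact hs
      have hrs : r ∣ s.val := by
        have h3 : d * r ∣ (d * n') * s.val := by rw [← hn', ← hqrd]; exact hdvd
        have h4 : r ∣ n' * s.val := by
          rcases h3 with ⟨c, hc⟩
          refine ⟨c, ?_⟩
          have h5 : d * (n' * s.val) = d * (r * c) := by
            rw [← mul_assoc, ← mul_assoc]; exact hc
          exact Nat.eq_of_mul_eq_mul_left hdpos h5
        have hcop : Nat.Coprime r n' := by
          have := Nat.coprime_div_gcd_div_gcd (m := q) (n := n) (by rw [Nat.gcd_comm]; exact hdpos)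
          have hq' : q / Nat.gcd q n = r := by rw [Nat.gcd_comm, ← hd, ← hr]
          have hn'' : n / Nat.gcd q n = n' := by
            rw [Nat.gcd_comm, ← hd, hn', Nat.mul_div_cancel_left _ hdpos]
          rwa [hq', hn''] at this
        exact hcop.dvd_of_dvd_mul_left h4
      obtain ⟨j, hj⟩ := hrs
      have hjd : j < d := by
        have h6 := ZMod.val_lt s
        have h7 : r * j < r * d := by
          rw [← hj, mul_comm r d, ← hqrd]; exact h6
        exact Nat.lt_of_mul_lt_mul_left h7
      refine ⟨⟨j, hjd⟩, ?_⟩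
      apply Subtype.ext
      show ((j * r : ℕ) : ZMod q) = s
      rw [← hsval, hj]
      congr 1
      ring
  rw [Nat.card_congr (Equiv.ofBijective _ hbij).symm, Nat.card_eq_fintype_card,
    Fintype.card_fin]

noncomputable def Wfun (q : ℕ) [NeZero q] (c : ℕ) : ℚ :=
  ∑ s ∈ Finset.univ \ {(0 : ZMod q)}, (if s = c • s then (1:ℚ) else 0)

lemma W_zero : Wfun q 0 = 0 := by
  rw [Wfun]
  refine Finset.sum_eq_zero fun s hs => ?_
  rw [Finset.mem_sdiff, Finset.mem_singleton] at hs
  rw [if_neg (by simpa using hs.2)]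

lemma W_succ (c : ℕ) : Wfun q (c+1) = (Nat.gcd c q : ℚ) - 1 := by
  classical
  have hcond : ∀ s : ZMod q, (s = (c+1) • s) ↔ ((c : ZMod q) * s = 0) := by
    intro s
    rw [succ_nsmul, nsmul_eq_mul, right_eq_add]
  have htot : ∑ s : ZMod q, (if s = (c+1) • s then (1:ℚ) else 0) = (Nat.gcd c q : ℚ) := by
    rw [← ker_card (q := q) c, Nat.card_eq_fintype_card, Fintype.card_subtype]
    rw [Finset.card_eq_sum_ones]
    push_cast
    rw [Finset.sum_filter]
    exact Finset.sum_congr rfl fun s _ => if_congr (hcond s) rfl rfl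
  have hsplit : ∑ s : ZMod q, (if s = (c+1) • s then (1:ℚ) else 0)
      = (if (0:ZMod q) = (c+1) • (0:ZMod q) then (1:ℚ) else 0) + Wfun q (c+1) := by
    rw [Wfun]
    exact Finset.sum_eq_add_sum_sdiff_singleton_of_mem (Finset.mem_univ (0 : ZMod q)) _
  rw [htot] at hsplit
  rw [if_pos (by simp)] at hsplit
  linarith

lemma comb (m : ℕ) :
    ∑ i ∈ Finset.range (m+2), (Nat.choose m i : ℚ) * (Wfun q i + Wfun q (i+1))
      = ∑ j ∈ Finset.range (m+2), (Nat.choose (m+1) (j+1) : ℚ) * ((Nat.gcd j q : ℚ) - 1) := by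
  have h1 : ∑ i ∈ Finset.range (m+2), (Nat.choose m i : ℚ) * Wfun q i
      = ∑ i ∈ Finset.range (m+2), (Nat.choose m (i+1) : ℚ) * ((Nat.gcd i q : ℚ) - 1) := by
    rw [Finset.sum_range_succ' (fun i => (Nat.choose m i : ℚ) * Wfun q i) (m+1)]
    rw [W_zero, mul_zero, add_zero]
    rw [Finset.sum_range_succ (fun i => (Nat.choose m (i+1) : ℚ) * ((Nat.gcd i q : ℚ) - 1)) (m+1)]
    rw [Nat.choose_eq_zero_of_lt (show m < m + 1 + 1 by omega)]
    push_cast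
    rw [zero_mul, add_zero]
    exact Finset.sum_congr rfl fun i _ => by rw [W_succ]
  have h2 : ∑ i ∈ Finset.range (m+2), (Nat.choose m i : ℚ) * Wfun q (i+1)
      = ∑ i ∈ Finset.range (m+2), (Nat.choose m i : ℚ) * ((Nat.gcd i q : ℚ) - 1) := by
    exact Finset.sum_congr rfl fun i _ => by rw [W_succ]
  simp_rw [mul_add]
  rw [Finset.sum_add_distrib, h1, h2, ← Finset.sum_add_distrib]
  refine Finset.sum_congr rfl fun j _ => ?_
  rw [Nat.choose_succ_succ m j]
  push_cast
  ring

lemma sum_diff_card : ((Finset.univ \ {(0:ZMod q)}).card : ℚ) = (q:ℚ) - 1 := by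
  rw [Finset.card_sdiff_of_subset (by simp)]
  rw [Finset.card_univ, ZMod.card, Finset.card_singleton]
  have hq : 0 < q := Nat.pos_of_ne_zero (NeZero.ne q)
  push_cast [hq]
  ring

lemma chiN_formula (m : ℕ) :
    (chiQuasi (Ntilde (m+1)) q : ℚ)
      = (((q:ℚ)-1)^(m+1) - (-1:ℚ)^(m+1))/q + (-1:ℚ)^(m+1)
        + ((q:ℚ)-1) * ((((q:ℚ)-2)^(m+1) - (-2:ℚ)^(m+1))/q)
        + (-1:ℚ)^(m+1) * ∑ j ∈ range (m+2),
            (Nat.choose (m+1) (j+1) : ℚ) * ((Nat.gcd j q : ℚ) - 1) := by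
  classical
  rw [chiN_eq, Nat.cast_sum]
  rw [Finset.sum_eq_add_sum_sdiff_singleton_of_mem (Finset.mem_univ (0:ZMod q))
    (fun s => (gcount q s (m+1) s : ℚ))]
  rw [closed_zero (m+1) 0, if_pos rfl, mul_one]
  have hterm : ∀ s ∈ Finset.univ \ {(0:ZMod q)}, (gcount q s (m+1) s : ℚ)
      = (((q:ℚ)-2)^(m+1) - (-2:ℚ)^(m+1))/q
        + (-1:ℚ)^(m+1) * ∑ i ∈ range (m+2), (Nat.choose m i : ℚ) *
            ((if s = i • s then (1:ℚ) else 0) + (if s = (i+1) • s then (1:ℚ) else 0)) := by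
    intro s hs
    rw [Finset.mem_sdiff, Finset.mem_singleton] at hs
    exact closed_ne s hs.2 m s
  rw [Finset.sum_congr rfl hterm]
  rw [Finset.sum_add_distrib, Finset.sum_const, nsmul_eq_mul, sum_diff_card]
  have hswap : ∑ s ∈ Finset.univ \ {(0:ZMod q)},
      (-1:ℚ)^(m+1) * ∑ i ∈ range (m+2), (Nat.choose m i : ℚ) *
        ((if s = i • s then (1:ℚ) else 0) + (if s = (i+1) • s then (1:ℚ) else 0))
      = (-1:ℚ)^(m+1) * ∑ i ∈ range (m+2), (Nat.choose m i : ℚ) *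
          (Wfun q i + Wfun q (i+1)) := by
    rw [← Finset.mul_sum]
    congr 1
    rw [Finset.sum_comm]
    refine Finset.sum_congr rfl fun i _ => ?_
    rw [← Finset.mul_sum]
    congr 1
    rw [Wfun, Wfun, ← Finset.sum_add_distrib]
  rw [hswap, comb]
  ring

lemma chiZ_formula (m : ℕ) :
    (chiQuasi (Ztilde (m+1)) q : ℚ)
      = ((q:ℚ)-1) * ((((q:ℚ)-2)^(m+1) - (-2:ℚ)^(m+1))/q)
        + (-1:ℚ)^(m+1) * ∑ j ∈ range (m+2),
            (Nat.choose (m+1) (j+1) : ℚ) * ((Nat.gcd j q : ℚ) - 1) := by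
  classical
  rw [chiZ_eq, Nat.cast_sum]
  rw [Finset.sum_eq_add_sum_sdiff_singleton_of_mem (Finset.mem_univ (0:ZMod q))
    (fun s => ((if s = 0 then 0 else gcount q s (m+1) s : ℕ) : ℚ))]
  rw [if_pos rfl]
  have hterm : ∀ s ∈ Finset.univ \ {(0:ZMod q)},
      (((if s = 0 then 0 else gcount q s (m+1) s : ℕ)) : ℚ)
      = (((q:ℚ)-2)^(m+1) - (-2:ℚ)^(m+1))/q
        + (-1:ℚ)^(m+1) * ∑ i ∈ range (m+2), (Nat.choose m i : ℚ) *
            ((if s = i • s then (1:ℚ) else 0) + (if s = (i+1) • s then (1:ℚ) else 0)) := by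
    intro s hs
    rw [Finset.mem_sdiff, Finset.mem_singleton] at hs
    rw [if_neg hs.2]
    exact closed_ne s hs.2 m s
  rw [Finset.sum_congr rfl hterm]
  rw [Finset.sum_add_distrib, Finset.sum_const, nsmul_eq_mul, sum_diff_card]
  have hswap : ∑ s ∈ Finset.univ \ {(0:ZMod q)},
      (-1:ℚ)^(m+1) * ∑ i ∈ range (m+2), (Nat.choose m i : ℚ) *
        ((if s = i • s then (1:ℚ) else 0) + (if s = (i+1) • s then (1:ℚ) else 0))
      = (-1:ℚ)^(m+1) * ∑ i ∈ range (m+2), (Nat.choose m i : ℚ) *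
          (Wfun q i + Wfun q (i+1)) := by
    rw [← Finset.mul_sum]
    congr 1
    rw [Finset.sum_comm]
    refine Finset.sum_congr rfl fun i _ => ?_
    rw [← Finset.mul_sum]
    congr 1
    rw [Wfun, Wfun, ← Finset.sum_add_distrib]
  rw [hswap, comb]
  push_cast
  ring

section QP
open Polynomial

/-- the bounded fluctuating part -/
noncomputable def hsum (k q : ℕ) : ℚ :=
  ∑ j ∈ Finset.Icc 2 (k-1), (Nat.choose k (j+1) : ℚ) * ((Nat.gcd j q : ℚ) - 1)

lemma split_sum (m q : ℕ) (hm : 1 ≤ m) (hq : 0 < q) :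
    ∑ j ∈ range (m+2), (Nat.choose (m+1) (j+1) : ℚ) * ((Nat.gcd j q : ℚ) - 1)
      = ((m:ℚ)+1) * ((q:ℚ)-1) + hsum (m+1) q := by
  have hset : range (m+2) = insert 0 (insert 1 (insert (m+1) (Finset.Icc 2 m))) := by
    ext x
    simp only [mem_range, mem_insert, Finset.mem_Icc]
    omega
  rw [hset]
  rw [Finset.sum_insert (by simp only [Finset.mem_insert, Finset.mem_Icc]; omega),
    Finset.sum_insert (by simp only [Finset.mem_insert, Finset.mem_Icc]; omega),
    Finset.sum_insert (by simp only [Finset.mem_Icc]; omega)]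
  rw [Nat.gcd_zero_left, Nat.gcd_one_left]
  rw [Nat.choose_eq_zero_of_lt (show m + 1 < m + 1 + 1 by omega)]
  have : hsum (m+1) q = ∑ j ∈ Finset.Icc 2 m, (Nat.choose (m+1) (j+1) : ℚ) * ((Nat.gcd j q : ℚ) - 1) := by
    rw [hsum]
    congr 1
  rw [this, Nat.choose_one_right]
  push_cast
  ring

lemma gcd_mod_eq (j L q : ℕ) (hj : j ∣ L) : Nat.gcd j q = Nat.gcd j (q % L) := by
  rcases Nat.eq_zero_or_pos j with h | h
  · subst h
    simp at hj ⊢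
    rcases hj with rfl
    simp [Nat.mod_self]
  · conv_lhs => rw [Nat.gcd_rec]
    conv_rhs => rw [Nat.gcd_rec]
    rw [Nat.mod_mod_of_dvd q hj]

lemma eval_divX (N : Polynomial ℚ) (h0 : N.eval 0 = 0) (x : ℚ) (hx : x ≠ 0) :
    (N /ₘ X).eval x = N.eval x / x := by
  have := Polynomial.modByMonic_add_div N X
  rw [Polynomial.modByMonic_X, h0, map_zero, zero_add] at this
  conv_rhs => rw [← this]
  rw [Polynomial.eval_mul, Polynomial.eval_X]
  field_simp

lemma prime_pow_dvd_lcm (S : Finset ℕ) (h0 : ∀ j ∈ S, j ≠ 0) {p n : ℕ}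
    (hp : p.Prime) (hn : 1 ≤ n) (hd : p ^ n ∣ S.lcm id) : ∃ j ∈ S, p ^ n ∣ j := by
  classical
  induction S using Finset.induction_on with
  | empty =>
    exfalso
    rw [Finset.lcm_empty] at hd
    have := Nat.le_of_dvd (by norm_num) hd
    have := Nat.one_lt_pow (n := n) (by omega) hp.one_lt
    omega
  | @insert a S ha ih =>
    rw [Finset.lcm_insert] at hd
    have haz : a ≠ 0 := h0 a (Finset.mem_insert_self a S)
    have hSz : S.lcm id ≠ 0 := by
      rw [Ne, Finset.lcm_eq_zero_iff]
      rintro ⟨x, hx, hx0⟩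
      exact h0 x (Finset.mem_insert_of_mem hx) (by simpa using hx0)
    have hlz : Nat.lcm a (S.lcm id) ≠ 0 := Nat.lcm_ne_zero haz hSz
    have hfac : n ≤ (Nat.lcm a (S.lcm id)).factorization p :=
      (hp.pow_dvd_iff_le_factorization hlz).mp hd
    rw [Nat.factorization_lcm haz hSz] at hfac
    simp only [Finsupp.sup_apply] at hfac
    rcases le_total ((Nat.factorization a) p) ((Nat.factorization (S.lcm id)) p) with hle | hle
    · rw [sup_of_le_right hle] at hfac
      obtain ⟨j, hj, hjd⟩ := ih (fun j hj => h0 j (Finset.mem_insert_of_mem hj))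
        ((hp.pow_dvd_iff_le_factorization hSz).mpr hfac)
      exact ⟨j, Finset.mem_insert_of_mem hj, hjd⟩
    · rw [sup_of_le_left hle] at hfac
      exact ⟨a, Finset.mem_insert_self a S,
        (hp.pow_dvd_iff_le_factorization haz).mpr hfac⟩


theorem master (k : ℕ) (hk : 2 ≤ k) (chi : ℕ → ℕ) (MP : Polynomial ℚ)
    (hf : ∀ q : ℕ, 0 < q → (chi q : ℚ) = MP.eval (q:ℚ) + (-1:ℚ)^k * hsum k q) :
    IsQuasiPolyPeriod chi ((Finset.Icc 1 (k-1)).lcm id) ∧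
      ∀ ρ : ℕ, 0 < ρ → IsQuasiPolyPeriod chi ρ → (Finset.Icc 1 (k-1)).lcm id ∣ ρ := by
  classical
  set L := (Finset.Icc 1 (k-1)).lcm id with hL
  have hLpos : 0 < L := by
    rcases Nat.eq_zero_or_pos L with h | h
    · exfalso
      rw [hL, Finset.lcm_eq_zero_iff] at h
      obtain ⟨x, hx, hx0⟩ := h
      simp only [Finset.coe_Icc, Set.mem_Icc, Finset.mem_Icc] at hx
      simp only [id] at hx0
      omega
    · exact h
  have hdvdL : ∀ j ∈ Finset.Icc 2 (k-1), j ∣ L := by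
    intro j hj
    rw [Finset.mem_Icc] at hj
    exact Finset.dvd_lcm (f := id) (by rw [Finset.mem_Icc]; omega)
  have hsum_mod : ∀ q : ℕ, hsum k q = hsum k (q % L) := by
    intro q
    rw [hsum, hsum]
    refine Finset.sum_congr rfl fun j hj => ?_
    rw [gcd_mod_eq j L q (hdvdL j hj)]
  constructor
  · refine ⟨fun m => MP + Polynomial.C ((-1:ℚ)^k * hsum k m), fun q hq => ?_⟩
    rw [hf q hq, Polynomial.eval_add, Polynomial.eval_C, hsum_mod q]
  · rintro ρ hρ ⟨f, hfρ⟩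
    rw [← Nat.factorization_le_iff_dvd hLpos.ne' hρ.ne', Finsupp.le_def]
    intro p
    by_contra hcon
    push_neg at hcon
    set a := L.factorization p with ha
    have hppr : p.Prime := by
      by_contra hnp
      rw [Nat.factorization_eq_zero_of_not_prime L hnp] at ha
      omega
    have ha1 : 1 ≤ a := by omega
    have hPL : p ^ a ∣ L := Nat.ordProj_dvd L p
    have hPρ : ¬ p ^ a ∣ ρ := by
      intro hdvd
      have := (hppr.pow_dvd_iff_le_factorization hρ.ne').mp hdvd
      omega
    obtain ⟨j0, hj0mem, hj0P⟩ := prime_pow_dvd_lcm (Finset.Icc 1 (k-1))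
      (fun j hj => by rw [Finset.mem_Icc] at hj; omega) hppr ha1 hPL
    rw [Finset.mem_Icc] at hj0mem
    set P := p ^ a with hP
    have hP2 : 2 ≤ P := by
      have h1 : 2 ≤ p := hppr.two_le
      have h2 : p ≤ p ^ a := Nat.le_self_pow (by omega) p
      omega
    have hPk : P ≤ k - 1 := by
      have := Nat.le_of_dvd (by omega) hj0P
      omega
    have hPIcc : P ∈ Finset.Icc 2 (k-1) := by rw [Finset.mem_Icc]; exact ⟨hP2, hPk⟩
    set H : ℚ := ∑ j ∈ Finset.Icc 2 (k-1), (Nat.choose k (j+1) : ℚ) * ((j:ℚ) - 1) with hH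
    have hallL : ∀ q : ℕ, L ∣ q → hsum k q = H := by
      intro q hLq
      rw [hsum, hH]
      refine Finset.sum_congr rfl fun j hj => ?_
      rw [Nat.gcd_eq_left ((hdvdL j hj).trans hLq)]
    set F := f (L % ρ) with hF
    have hzero : F - (MP + Polynomial.C ((-1:ℚ)^k * H)) = 0 := by
      apply Polynomial.eq_zero_of_infinite_isRoot
      apply Set.infinite_of_injective_forall_mem
        (f := fun t : ℕ => ((L * (1 + ρ * t) : ℕ) : ℚ))
      · have hmono : StrictMono (fun t : ℕ => L * (1 + ρ * t)) := by
          intro t t' htt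
          have h1 : ρ * t < ρ * t' := (Nat.mul_lt_mul_left hρ).mpr htt
          have h2 : 1 + ρ * t < 1 + ρ * t' := by omega
          exact (Nat.mul_lt_mul_left hLpos).mpr h2
        exact fun t t' htt => hmono.injective (Nat.cast_injective htt)
      · intro t
        set qt := L * (1 + ρ * t) with hqt
        have hqtpos : 0 < qt := Nat.mul_pos hLpos (by omega)
        have hqtmod : qt % ρ = L % ρ := by
          rw [hqt, show L * (1 + ρ * t) = L + (L * t) * ρ by ring,
            Nat.add_mul_mod_self_right]
        have e1 := hfρ qt hqtpos
        rw [hqtmod, ← hF] at e1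
        have e2 := hf qt hqtpos
        rw [hallL qt (Dvd.intro _ rfl)] at e2
        show Polynomial.IsRoot _ ((qt : ℕ) : ℚ)
        rw [Polynomial.IsRoot, Polynomial.eval_sub, Polynomial.eval_add, Polynomial.eval_C]
        rw [← e1, e2]
        ring
    have hFeq : F = MP + Polynomial.C ((-1:ℚ)^k * H) := by rwa [sub_eq_zero] at hzero
    set q2 := L + ρ with hq2
    have hq2pos : 0 < q2 := by omega
    have hq2mod : q2 % ρ = L % ρ := Nat.add_mod_right L ρ
    have e1 := hfρ q2 hq2pos
    rw [hq2mod, ← hF, hFeq, Polynomial.eval_add, Polynomial.eval_C] at e1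
    have e2 := hf q2 hq2pos
    have heq : hsum k q2 = H := by
      have h3 : (-1:ℚ)^k * hsum k q2 = (-1:ℚ)^k * H := by linarith
      exact mul_left_cancel₀ (pow_ne_zero k (by norm_num)) h3
    have hlt : hsum k q2 < H := by
      rw [hsum, hH]
      refine Finset.sum_lt_sum (fun j hj => ?_) ⟨P, hPIcc, ?_⟩
      · rw [Finset.mem_Icc] at hj
        have hgle : Nat.gcd j q2 ≤ j := Nat.gcd_le_left q2 (by omega)
        have : ((Nat.gcd j q2 : ℚ)) - 1 ≤ (j:ℚ) - 1 := by
          have : ((Nat.gcd j q2 : ℚ)) ≤ (j:ℚ) := by exact_mod_cast hgle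
          linarith
        exact mul_le_mul_of_nonneg_left this (by positivity)
      · have hglt : Nat.gcd P q2 < P := by
          have hgle : Nat.gcd P q2 ≤ P := Nat.gcd_le_left q2 (by omega)
          rcases Nat.lt_or_ge (Nat.gcd P q2) P with h | h
          · exact h
          · exfalso
            have hgeq : Nat.gcd P q2 = P := le_antisymm hgle h
            have hPq2 : P ∣ q2 := hgeq ▸ Nat.gcd_dvd_right P q2
            rw [hq2] at hPq2
            exact hPρ ((Nat.dvd_add_right hPL).mp hPq2)
        have hcpos : (0:ℚ) < (Nat.choose k (P+1) : ℚ) := by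
          have : 0 < Nat.choose k (P+1) := Nat.choose_pos (by omega)
          exact_mod_cast this
        apply mul_lt_mul_of_pos_left _ hcpos
        have : ((Nat.gcd P q2 : ℚ)) < (P:ℚ) := by exact_mod_cast hglt
        linarith
    linarith

end QP

section Final
open Polynomial

lemma chiN_quasi (m : ℕ) (hm : 1 ≤ m) :
    ∃ MP : Polynomial ℚ, ∀ q : ℕ, 0 < q →
      (chiQuasi (Ntilde (m+1)) q : ℚ) = MP.eval (q:ℚ) + (-1:ℚ)^(m+1) * hsum (m+1) q := by
  classical
  set Num : Polynomial ℚ := (X - C 1)^(m+1) - C ((-1:ℚ)^(m+1))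
      + (X - C 1) * ((X - C 2)^(m+1) - C ((-2:ℚ)^(m+1))) with hNum
  have h0 : Num.eval 0 = 0 := by
    rw [hNum]
    simp only [Polynomial.eval_add, Polynomial.eval_sub, Polynomial.eval_mul,
      Polynomial.eval_pow, Polynomial.eval_X, Polynomial.eval_C]
    ring
  refine ⟨(Num /ₘ X) + C ((-1:ℚ)^(m+1)) + C ((-1:ℚ)^(m+1) * ((m:ℚ)+1)) * (X - C 1), ?_⟩
  intro q hq
  haveI : NeZero q := ⟨hq.ne'⟩
  have hq0 : (q:ℚ) ≠ 0 := by exact_mod_cast hq.ne'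
  rw [chiN_formula m, split_sum m q hm hq]
  rw [Polynomial.eval_add, Polynomial.eval_add, Polynomial.eval_mul, Polynomial.eval_C,
    Polynomial.eval_C, Polynomial.eval_sub, Polynomial.eval_X, Polynomial.eval_C]
  rw [eval_divX Num h0 (q:ℚ) hq0]
  rw [hNum]
  simp only [Polynomial.eval_add, Polynomial.eval_sub, Polynomial.eval_mul,
    Polynomial.eval_pow, Polynomial.eval_X, Polynomial.eval_C]
  field_simp
  ring

lemma chiZ_quasi (m : ℕ) (hm : 1 ≤ m) :
    ∃ MP : Polynomial ℚ, ∀ q : ℕ, 0 < q →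
      (chiQuasi (Ztilde (m+1)) q : ℚ) = MP.eval (q:ℚ) + (-1:ℚ)^(m+1) * hsum (m+1) q := by
  classical
  set Num : Polynomial ℚ := (X - C 1) * ((X - C 2)^(m+1) - C ((-2:ℚ)^(m+1))) with hNum
  have h0 : Num.eval 0 = 0 := by
    rw [hNum]
    simp only [Polynomial.eval_add, Polynomial.eval_sub, Polynomial.eval_mul,
      Polynomial.eval_pow, Polynomial.eval_X, Polynomial.eval_C]
    ring
  refine ⟨(Num /ₘ X) + C ((-1:ℚ)^(m+1) * ((m:ℚ)+1)) * (X - C 1), ?_⟩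
  intro q hq
  haveI : NeZero q := ⟨hq.ne'⟩
  have hq0 : (q:ℚ) ≠ 0 := by exact_mod_cast hq.ne'
  rw [chiZ_formula m, split_sum m q hm hq]
  rw [Polynomial.eval_add, Polynomial.eval_mul, Polynomial.eval_C,
    Polynomial.eval_sub, Polynomial.eval_X, Polynomial.eval_C]
  rw [eval_divX Num h0 (q:ℚ) hq0]
  rw [hNum]
  simp only [Polynomial.eval_add, Polynomial.eval_sub, Polynomial.eval_mul,
    Polynomial.eval_pow, Polynomial.eval_X, Polynomial.eval_C]
  field_simp
  ring


end Final
end Aux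

theorem stmt19 (k : ℕ) (hk : 2 ≤ k) :
    (IsQuasiPolyPeriod (chiQuasi (Ntilde k)) ((Finset.Icc 1 (k - 1)).lcm id) ∧
      ∀ ρ : ℕ, 0 < ρ → IsQuasiPolyPeriod (chiQuasi (Ntilde k)) ρ →
        (Finset.Icc 1 (k - 1)).lcm id ∣ ρ) ∧
    (IsQuasiPolyPeriod (chiQuasi (Ztilde k)) ((Finset.Icc 1 (k - 1)).lcm id) ∧
      ∀ ρ : ℕ, 0 < ρ → IsQuasiPolyPeriod (chiQuasi (Ztilde k)) ρ →
        (Finset.Icc 1 (k - 1)).lcm id ∣ ρ) := by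
  obtain ⟨m, rfl⟩ : ∃ m, k = m + 1 := ⟨k - 1, by omega⟩
  have hm : 1 ≤ m := by omega
  obtain ⟨MPN, hMPN⟩ := chiN_quasi m hm
  obtain ⟨MPZ, hMPZ⟩ := chiZ_quasi m hm
  exact ⟨master (m+1) (by omega) _ MPN hMPN, master (m+1) (by omega) _ MPZ hMPZ⟩


end ArrCode
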